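/- Let B, C, D, K, P, Q be positive real numbers with C ≤ 1, and suppose R0 := C P K / D > 1. Then there exists exactly one pair (U, V) with U > 0 and V > 0 satisfying B U (1 - U/K) = P U V + Q U V^2 and C(P U V + Q U V^2) = D V; that is, the system U' = B U(1 - U/K) - P U V - Q U V^2, V' = C(P U V + Q U V^2) - D V has a unique positive equilibrium. -/

import Mathlib

/-- Uniqueness of the positive root of the cubic
`V*(P+Q*V)^2 - B*(P+Q*V) + E`. -/
lemma cubic_root_unique (B P Q E : ℝ) (hB : 0 < B) (hP : 0 < P) (hQ : 0 < Q)
    (hEBP : E < B * P) (a b : ℝ) (ha : 0 < a) (hb : 0 < b)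
    (hha : a * (P + Q * a) ^ 2 - B * (P + Q * a) + E = 0)
    (hhb : b * (P + Q * b) ^ 2 - B * (P + Q * b) + E = 0) : a = b := by
  have hsa : 0 < Q ^ 2 * a ^ 2 + 2 * P * Q * a + P ^ 2 - B * Q := by
    have h1 : a * (Q ^ 2 * a ^ 2 + 2 * P * Q * a + P ^ 2 - B * Q) = B * P - E := by
      linear_combination hha
    nlinarith [mul_pos ha ha]
  have key : (b - a) * ((Q ^ 2 * a ^ 2 + 2 * P * Q * a + P ^ 2 - B * Q)
      + Q ^ 2 * b * (a + b) + 2 * P * Q * b) = 0 := by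
    linear_combination hhb - hha
  have hF : 0 < (Q ^ 2 * a ^ 2 + 2 * P * Q * a + P ^ 2 - B * Q)
      + Q ^ 2 * b * (a + b) + 2 * P * Q * b := by
    nlinarith [mul_pos hb (add_pos ha hb), mul_pos hP hb]
  have := (mul_eq_zero.mp key).resolve_right (ne_of_gt hF)
  linarith

/-- For positive `B, C, D, K, P, Q` with `C ≤ 1` and
`R0 = CPK/D > 1`, the non-scaled system has a unique positive equilibrium. -/
theorem unique_positive_equilibrium_nonscaled (B C D K P Q : ℝ)
    (hB : 0 < B) (hC : 0 < C) (hD : 0 < D) (hK : 0 < K) (hP : 0 < P) (hQ : 0 < Q)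
    (hC1 : C ≤ 1) (hR0 : 1 < C * P * K / D) :
    ∃! UV : ℝ × ℝ, 0 < UV.1 ∧ 0 < UV.2 ∧
      B * UV.1 * (1 - UV.1 / K) = P * UV.1 * UV.2 + Q * UV.1 * UV.2 ^ 2 ∧
      C * (P * UV.1 * UV.2 + Q * UV.1 * UV.2 ^ 2) = D * UV.2 := by
  have hKC : 0 < K * C := mul_pos hK hC
  have hDKC : D < C * P * K := (one_lt_div hD).mp hR0
  set E : ℝ := B * D / (K * C) with hE
  have hEpos : 0 < E := by positivity
  have hEBP : E < B * P := by
    rw [hE, div_lt_iff₀ hKC]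
    nlinarith
  set h : ℝ → ℝ := fun V => V * (P + Q * V) ^ 2 - B * (P + Q * V) + E with hh
  have hcont : Continuous h := by fun_prop
  have h0 : h 0 < 0 := by
    simp only [hh]
    nlinarith
  have hBP : (0:ℝ) < B / P := by positivity
  have hBPval : 0 < h (B / P) := by
    have : h (B / P) = (P + Q * B / P) * (Q * B ^ 2 / P ^ 2) + E := by
      simp only [hh]
      field_simp
      ring
    rw [this]
    positivity
  -- existence of a root via IVT
  obtain ⟨V, hVmem, hhV⟩ := intermediate_value_Icc hBP.le hcont.continuousOn
    (Set.mem_Icc.mpr ⟨h0.le, hBPval.le⟩)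
  have hVpos : 0 < V := by
    rcases hVmem.1.lt_or_eq with h' | h'
    · exact h'
    · exfalso
      rw [← h'] at hhV
      linarith
  have hW : 0 < P + Q * V := by positivity
  set U : ℝ := D / (C * (P + Q * V)) with hU
  have hUpos : 0 < U := by positivity
  have hUeq : C * U * (P + Q * V) = D := by
    rw [hU]; field_simp
  have hhV1 : V * (P + Q * V) ^ 2 - B * (P + Q * V) + B * D / (K * C) = 0 := hhV
  have h2 : B * D / (K * C) = B * (P + Q * V) - V * (P + Q * V) ^ 2 := by linarith
  have h3 : B * D = (B * (P + Q * V) - V * (P + Q * V) ^ 2) * (K * C) :=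
    (div_eq_iff hKC.ne').mp h2
  -- first equation for (U, V)
  have e1 : B * U * (1 - U / K) = P * U * V + Q * U * V ^ 2 := by
    rw [hU]
    field_simp
    linear_combination (-1 : ℝ) * h3
  have e2 : C * (P * U * V + Q * U * V ^ 2) = D * V := by
    linear_combination V * hUeq
  refine ⟨(U, V), ⟨hUpos, hVpos, e1, e2⟩, ?_⟩
  rintro ⟨U', V'⟩ ⟨hU', hV', f1, f2⟩
  simp only at hU' hV' f1 f2
  have hW' : 0 < P + Q * V' := by positivity
  -- derive the reduced equations for (U', V')
  have eq2' : C * U' * (P + Q * V') = D := by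
    have hmul : (C * U' * (P + Q * V')) * V' = D * V' := by linear_combination f2
    exact mul_right_cancel₀ (ne_of_gt hV') hmul
  have eq1c : B * (K - U') = K * (V' * (P + Q * V')) := by
    have hmul : (B * (K - U')) * U' = (K * (V' * (P + Q * V'))) * U' := by
      have f1' := f1
      field_simp at f1'
      linear_combination U' * f1'
    exact mul_right_cancel₀ (ne_of_gt hU') hmul
  have hhV0c : K * C * (V' * (P + Q * V') ^ 2 - B * (P + Q * V')) + B * D = 0 := by
    linear_combination (-(C * (P + Q * V'))) * eq1c - B * eq2'
  have hhV'0 : V' * (P + Q * V') ^ 2 - B * (P + Q * V') + E = 0 := by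
    rw [hE]
    field_simp
    linear_combination hhV0c
  have hVeq : V = V' :=
    cubic_root_unique B P Q E hB hP hQ hEBP V V' hVpos hV' hhV hhV'0
  have hUeq' : U' = U := by
    rw [hU, hVeq, eq_div_iff (by positivity)]
    linear_combination eq2'
  simp [Prod.ext_iff, hUeq', hVeq]
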